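/- Let n ≥ k > (n+1)/2, H_n = { Σ_{i=0}^{n-1} a_i 4^i : a_i ∈ {0,1} } and I_k = [0, (4^k - 1)/3) ∩ ℤ. Then |H_n + I_k| = 2·((4^k - 1)/3)·2^{n-k}. -/

import Mathlib

open Pointwise

def Hcube (n : ℕ) : Set ℤ :=
  {x | ∃ a : ℕ → ℤ, (∀ i, a i = 0 ∨ a i = 1) ∧
    x = ∑ i ∈ Finset.range n, a i * 4 ^ i}

def Iinterval (k : ℕ) : Set ℤ := Set.Ico 0 (((4 : ℤ) ^ k - 1) / 3)

lemma geom_int (k : ℕ) : 3 * ∑ i ∈ Finset.range k, (4:ℤ)^i = 4^k - 1 := by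
  induction k with
  | zero => simp
  | succ k ih => rw [Finset.sum_range_succ, mul_add, ih, pow_succ]; ring

lemma M_eq (k : ℕ) : ((4:ℤ)^k - 1)/3 = ∑ i ∈ Finset.range k, 4^i := by
  rw [← geom_int k, Int.mul_ediv_cancel_left _ (by norm_num)]

lemma split_sum (k m : ℕ) (a : ℕ → ℤ) :
    ∑ i ∈ Finset.range (k+m), a i * 4^i =
      (∑ i ∈ Finset.range k, a i * 4^i) + 4^k * ∑ j ∈ Finset.range m, a (k+j) * 4^j := by
  rw [Finset.sum_range_add, Finset.mul_sum]
  congr 1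
  apply Finset.sum_congr rfl
  intro j _
  rw [pow_add]; ring

lemma high_sum (m : ℕ) (T : Finset ℕ) (hT : T ⊆ Finset.range m) :
    ∑ j ∈ Finset.range m, (if j ∈ T then (1:ℤ) else 0) * 4^j = ∑ j ∈ T, (4:ℤ)^j := by
  calc ∑ j ∈ Finset.range m, (if j ∈ T then (1:ℤ) else 0) * 4^j
      = ∑ j ∈ Finset.range m, (if j ∈ T then (4:ℤ)^j else 0) := by
        apply Finset.sum_congr rfl; intro j _; split <;> ring
    _ = ∑ j ∈ Finset.range m ∩ T, (4:ℤ)^j := Finset.sum_ite_mem _ _ _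
    _ = ∑ j ∈ T, (4:ℤ)^j := by rw [Finset.inter_eq_right.2 hT]

lemma main_set (k m : ℕ) :
    Hcube (k + m) + Iinterval k =
      ↑(((Finset.range m).powerset).biUnion (fun T =>
        Finset.Ico (4^k * ∑ i ∈ T, (4:ℤ)^i)
          (4^k * ∑ i ∈ T, (4:ℤ)^i + 2 * ∑ i ∈ Finset.range k, (4:ℤ)^i))) := by
  set Mk : ℤ := ∑ i ∈ Finset.range k, (4:ℤ)^i with hMk
  ext x
  simp only [Set.mem_add, Finset.coe_biUnion, Finset.mem_coe, Finset.mem_powerset,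
    Set.mem_iUnion, Finset.mem_Ico, Hcube, Iinterval, Set.mem_Ico, Set.mem_setOf_eq,
    M_eq, ← hMk]
  constructor
  · rintro ⟨h, ⟨a, ha, rfl⟩, r, ⟨hr0, hr1⟩, rfl⟩
    refine ⟨(Finset.range m).filter (fun j => a (k+j) = 1), Finset.filter_subset _ _, ?_⟩
    have hL0 : 0 ≤ ∑ i ∈ Finset.range k, a i * 4^i :=
      Finset.sum_nonneg (fun i _ => by rcases ha i with h | h <;> simp [h] <;> positivity)
    have hL1 : ∑ i ∈ Finset.range k, a i * 4^i ≤ Mk := by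
      apply Finset.sum_le_sum
      intro i _
      rcases ha i with h | h <;> simp [h] <;> positivity
    have hhigh : ∑ j ∈ (Finset.range m).filter (fun j => a (k+j) = 1), (4:ℤ)^j
        = ∑ j ∈ Finset.range m, a (k+j) * 4^j := by
      rw [Finset.sum_filter]
      apply Finset.sum_congr rfl
      intro j _
      rcases ha (k+j) with h | h <;> simp [h]
    rw [split_sum, hhigh]
    constructor <;> linarith
  · rintro ⟨T, hT, hx0, hx1⟩
    set fT : ℤ := ∑ i ∈ T, (4:ℤ)^i with hfT
    by_cases ht : x - 4^k * fT < Mk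
    · refine ⟨4^k * fT, ⟨fun i => if k ≤ i ∧ i - k ∈ T then 1 else 0,
        fun i => by dsimp only; split <;> simp, ?_⟩, x - 4^k * fT, ⟨by linarith, ht⟩, by ring⟩
      rw [split_sum]
      have hlow : ∑ i ∈ Finset.range k, (if k ≤ i ∧ i - k ∈ T then (1:ℤ) else 0) * 4^i = 0 := by
        apply Finset.sum_eq_zero
        intro i hi
        simp only [Finset.mem_range] at hi
        rw [if_neg (by omega), zero_mul]
      have hhigh : ∀ j, (if k ≤ k + j ∧ (k + j) - k ∈ T then (1:ℤ) else 0)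
          = (if j ∈ T then (1:ℤ) else 0) := by
        intro j
        congr 1
        simp only [eq_iff_iff]
        constructor
        · rintro ⟨_, h⟩; simpa using h
        · intro h; exact ⟨Nat.le_add_right _ _, by simpa using h⟩
      rw [hlow, zero_add]
      congr 1
      refine Eq.symm ?_
      calc ∑ j ∈ Finset.range m, (if k ≤ k + j ∧ (k + j) - k ∈ T then (1:ℤ) else 0) * 4^j
          = ∑ j ∈ Finset.range m, (if j ∈ T then (1:ℤ) else 0) * 4^j := by
            apply Finset.sum_congr rfl; intro j _; rw [hhigh]
        _ = fT := high_sum m T hT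
    · refine ⟨Mk + 4^k * fT, ⟨fun i => if i < k ∨ (k ≤ i ∧ i - k ∈ T) then 1 else 0,
        fun i => by dsimp only; split <;> simp, ?_⟩, x - 4^k * fT - Mk, ⟨by linarith, by linarith⟩, by ring⟩
      rw [split_sum]
      have hlow : ∑ i ∈ Finset.range k, (if i < k ∨ (k ≤ i ∧ i - k ∈ T) then (1:ℤ) else 0) * 4^i
          = Mk := by
        rw [hMk]
        apply Finset.sum_congr rfl
        intro i hi
        simp only [Finset.mem_range] at hi
        rw [if_pos (Or.inl hi), one_mul]
      have hhigh : ∀ j, (if k + j < k ∨ (k ≤ k + j ∧ (k + j) - k ∈ T) then (1:ℤ) else 0)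
          = (if j ∈ T then (1:ℤ) else 0) := by
        intro j
        congr 1
        simp only [eq_iff_iff]
        constructor
        · rintro (h | ⟨_, h⟩)
          · omega
          · simpa using h
        · intro h; exact Or.inr ⟨Nat.le_add_right _ _, by simpa using h⟩
      rw [hlow]
      congr 1
      congr 1
      refine Eq.symm ?_
      calc ∑ j ∈ Finset.range m, (if k + j < k ∨ (k ≤ k + j ∧ (k + j) - k ∈ T) then (1:ℤ) else 0) * 4^j
          = ∑ j ∈ Finset.range m, (if j ∈ T then (1:ℤ) else 0) * 4^j := by
            apply Finset.sum_congr rfl; intro j _; rw [hhigh]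
        _ = fT := high_sum m T hT

open Pointwise Finset

lemma geom_nat (k : ℕ) : (4^k - 1)/3 = ∑ i ∈ Finset.range k, 4^i := by
  have h : 3 * ∑ i ∈ Finset.range k, 4^i = 4^k - 1 := by
    induction k with
    | zero => simp
    | succ k ih =>
      have h1 : 1 ≤ 4^k := Nat.one_le_pow _ _ (by norm_num)
      rw [Finset.sum_range_succ, Nat.mul_add, ih, pow_succ]
      omega
  omega

lemma sum_pow_lt {m : ℕ} {A : Finset ℕ} (hA : A ⊆ Finset.range m) :
    ∑ i ∈ A, (4:ℤ)^i < 4^m := by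
  have h1 : ∑ i ∈ A, (4:ℤ)^i ≤ ∑ i ∈ Finset.range m, 4^i :=
    Finset.sum_le_sum_of_subset_of_nonneg hA (fun i _ _ => by positivity)
  have h2 := geom_int m
  have h3 : (0:ℤ) < 4^m := by positivity
  omega

lemma f_inj (m : ℕ) : ∀ A B : Finset ℕ, A ⊆ Finset.range m → B ⊆ Finset.range m →
    (∑ i ∈ A, (4:ℤ)^i) = ∑ i ∈ B, (4:ℤ)^i → A = B := by
  induction m with
  | zero =>
    intro A B hA hB _
    simp only [Finset.range_zero, Finset.subset_empty] at hA hB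
    rw [hA, hB]
  | succ m ih =>
    intro A B hA hB hsum
    have key : ∀ C D : Finset ℕ, C ⊆ Finset.range (m+1) → D ⊆ Finset.range (m+1) →
        m ∈ C → m ∉ D → ¬ (∑ i ∈ C, (4:ℤ)^i = ∑ i ∈ D, (4:ℤ)^i) := by
      intro C D hC hD hmC hmD heq
      have hD' : D ⊆ Finset.range m := by
        intro x hx
        have := hD hx
        simp only [Finset.mem_range] at this ⊢
        rcases Nat.lt_succ_iff_lt_or_eq.1 this with h | h
        · exact h
        · exact absurd (h ▸ hx) hmD
      have h1 : (4:ℤ)^m ≤ ∑ i ∈ C, (4:ℤ)^i :=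
        Finset.single_le_sum (fun i _ => by positivity) hmC
      have h2 := sum_pow_lt hD'
      omega
    by_cases hmA : m ∈ A <;> by_cases hmB : m ∈ B
    · have hA' : A.erase m ⊆ Finset.range m := by
        intro x hx
        have h1 := Finset.mem_of_mem_erase hx
        have h2 := Finset.ne_of_mem_erase hx
        have := hA h1
        simp only [Finset.mem_range] at this ⊢
        omega
      have hB' : B.erase m ⊆ Finset.range m := by
        intro x hx
        have h1 := Finset.mem_of_mem_erase hx
        have h2 := Finset.ne_of_mem_erase hx
        have := hB h1
        simp only [Finset.mem_range] at this ⊢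
        omega
      have eA : ∑ i ∈ A, (4:ℤ)^i = 4^m + ∑ i ∈ A.erase m, (4:ℤ)^i :=
        (Finset.add_sum_erase _ _ hmA).symm
      have eB : ∑ i ∈ B, (4:ℤ)^i = 4^m + ∑ i ∈ B.erase m, (4:ℤ)^i :=
        (Finset.add_sum_erase _ _ hmB).symm
      have := ih (A.erase m) (B.erase m) hA' hB' (by omega)
      have hAi : A = insert m (A.erase m) := (Finset.insert_erase hmA).symm
      have hBi : B = insert m (B.erase m) := (Finset.insert_erase hmB).symm
      rw [hAi, hBi, this]
    · exact absurd hsum (key A B hA hB hmA hmB)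
    · exact absurd hsum.symm (key B A hB hA hmB hmA)
    · have hA' : A ⊆ Finset.range m := by
        intro x hx
        have := hA hx
        simp only [Finset.mem_range] at this ⊢
        rcases Nat.lt_succ_iff_lt_or_eq.1 this with h | h
        · exact h
        · exact absurd (h ▸ hx) hmA
      have hB' : B ⊆ Finset.range m := by
        intro x hx
        have := hB hx
        simp only [Finset.mem_range] at this ⊢
        rcases Nat.lt_succ_iff_lt_or_eq.1 this with h | h
        · exact h
        · exact absurd (h ▸ hx) hmB
      exact ih A B hA' hB' hsum


theorem stmt_5 (n k : ℕ) (hkn : k ≤ n) (hk : n + 1 < 2 * k) :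
    (Hcube n + Iinterval k).ncard = 2 * ((4 ^ k - 1) / 3) * 2 ^ (n - k) := by
  have hm : n = k + (n - k) := (Nat.add_sub_cancel' hkn).symm
  set m := n - k with hmdef
  rw [hm, main_set k m, Set.ncard_coe_finset]
  set Mk : ℤ := ∑ i ∈ Finset.range k, (4:ℤ)^i with hMk
  have hgi := geom_int k
  have h4pos : (0:ℤ) < 4^k := by positivity
  rw [Finset.card_biUnion]
  · have hcard : ∀ T ∈ (Finset.range m).powerset,
        (Finset.Ico (4^k * ∑ i ∈ T, (4:ℤ)^i)
          (4^k * ∑ i ∈ T, (4:ℤ)^i + 2 * Mk)).card = (2 * Mk).toNat := by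
      intro T _
      rw [Int.card_Ico, add_sub_cancel_left]
    rw [Finset.sum_congr rfl hcard, Finset.sum_const, Finset.card_powerset,
      Finset.card_range, smul_eq_mul]
    have hcast : 2 * Mk = ((2 * ∑ i ∈ Finset.range k, 4^i : ℕ) : ℤ) := by
      rw [hMk]; push_cast; ring
    rw [hcast, Int.toNat_natCast, geom_nat]
    ring
  · intro T hT T' hT' hne
    simp only [Finset.mem_coe, Finset.mem_powerset] at hT hT'
    have hfne : (∑ i ∈ T, (4:ℤ)^i) ≠ ∑ i ∈ T', (4:ℤ)^i :=
      fun h => hne (f_inj m T T' hT hT' h)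
    refine Finset.disjoint_left.2 fun x hx hx' => ?_
    simp only [Finset.mem_Ico] at hx hx'
    rcases hfne.lt_or_gt with h | h
    · have h1 : (∑ i ∈ T, (4:ℤ)^i) + 1 ≤ ∑ i ∈ T', (4:ℤ)^i := Int.add_one_le_iff.2 h
      have h2 : 4^k * ((∑ i ∈ T, (4:ℤ)^i) + 1) ≤ 4^k * ∑ i ∈ T', (4:ℤ)^i :=
        mul_le_mul_of_nonneg_left h1 (by positivity)
      linarith
    · have h1 : (∑ i ∈ T', (4:ℤ)^i) + 1 ≤ ∑ i ∈ T, (4:ℤ)^i := Int.add_one_le_iff.2 h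
      have h2 : 4^k * ((∑ i ∈ T', (4:ℤ)^i) + 1) ≤ 4^k * ∑ i ∈ T, (4:ℤ)^i :=
        mul_le_mul_of_nonneg_left h1 (by positivity)
      linarith
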